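/- Let f: S → T be a posemigroup morphism between posemigroups. The following are equivalent: (1) f is closure preserving, i.e., f((M↓)̄) ⊆ (f(M)↓)̄ for every M ⊆ S; (2) (f(M̄)↓)̄ = (f(M)↓)̄ for every lower set M of S; (3) (f⁻¹(M)↓)̄ = f⁻¹(M) for every closed lower set M of T. -/

import Mathlib

open Pointwise

/-- The closure `D̄` of a subset of a posemigroup, with `b, c` ranging over `S¹`
(the four cases correspond to `b = c = 1`, `c = 1`, `b = 1`, and `b, c ∈ S`). -/
def pcl (S : Type*) [Semigroup S] [PartialOrder S] (D : Set S) : Set S :=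
  {x | ∀ a : S,
    ((∀ d ∈ D, d ≤ a) → x ≤ a) ∧
    (∀ b : S, (∀ d ∈ D, b * d ≤ a) → b * x ≤ a) ∧
    (∀ c : S, (∀ d ∈ D, d * c ≤ a) → x * c ≤ a) ∧
    (∀ b c : S, (∀ d ∈ D, b * d * c ≤ a) → b * x * c ≤ a)}

/-- A marked quantale structure on a posemigroup `S`: a marking (set of admissible
subsets) containing singletons and closed under translations by elements of `S¹`,
such that every admissible set has a join over which multiplication distributes. -/
structure MarkedQuantale (S : Type*) [Semigroup S] [PartialOrder S] : Type _ where
  mark : Set (Set S)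
  singleton_mem : ∀ a : S, {a} ∈ mark
  mul_left_mem : ∀ G ∈ mark, ∀ a : S, (a * ·) '' G ∈ mark
  mul_right_mem : ∀ G ∈ mark, ∀ b : S, (· * b) '' G ∈ mark
  mul_both_mem : ∀ G ∈ mark, ∀ a b : S, (fun x => a * x * b) '' G ∈ mark
  exists_lub : ∀ M ∈ mark, ∃ m : S, IsLUB M m
  lub_mul_left : ∀ M ∈ mark, ∀ m : S, IsLUB M m → ∀ a : S, IsLUB ((a * ·) '' M) (a * m)
  lub_mul_right : ∀ M ∈ mark, ∀ m : S, IsLUB M m → ∀ b : S, IsLUB ((· * b) '' M) (m * b)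
  lub_mul_both : ∀ M ∈ mark, ∀ m : S, IsLUB M m → ∀ a b : S,
    IsLUB ((fun x => a * x * b) '' M) (a * m * b)

/-- `D` is an `A`-ideal: a lower set closed under joins of its admissible subsets. -/
def IsAIdeal {S : Type*} [Semigroup S] [PartialOrder S] (A : Set (Set S)) (D : Set S) : Prop :=
  IsLowerSet D ∧ ∀ M ∈ A, M ⊆ D → ∀ m : S, IsLUB M m → m ∈ D

section Aux

variable {S : Type*} [Semigroup S] [PartialOrder S]

lemma subset_pcl (D : Set S) : D ⊆ pcl S D := fun x hx a =>
  ⟨fun h => h x hx, fun _ h => h x hx, fun _ h => h x hx, fun _ _ h => h x hx⟩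

lemma pcl_mono {D E : Set S} (h : D ⊆ E) : pcl S D ⊆ pcl S E := by
  intro x hx a
  obtain ⟨h1, h2, h3, h4⟩ := hx a
  exact ⟨fun hp => h1 fun d hd => hp d (h hd),
         fun b hp => h2 b fun d hd => hp d (h hd),
         fun c hp => h3 c fun d hd => hp d (h hd),
         fun b c hp => h4 b c fun d hd => hp d (h hd)⟩

lemma pcl_pcl (D : Set S) : pcl S (pcl S D) = pcl S D := by
  refine subset_antisymm ?_ (subset_pcl _)
  intro x hx a
  obtain ⟨h1, h2, h3, h4⟩ := hx a
  exact ⟨fun hp => h1 fun d hd => (hd a).1 hp,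
         fun b hp => h2 b fun d hd => (hd a).2.1 b hp,
         fun c hp => h3 c fun d hd => (hd a).2.2.1 c hp,
         fun b c hp => h4 b c fun d hd => (hd a).2.2.2 b c hp⟩

variable [CovariantClass S S (· * ·) (· ≤ ·)]
  [CovariantClass S S (Function.swap (· * ·)) (· ≤ ·)]

lemma pcl_isLowerSet (D : Set S) : IsLowerSet (pcl S D) := by
  intro x y hyx hx a
  obtain ⟨h1, h2, h3, h4⟩ := hx a
  exact ⟨fun hp => le_trans hyx (h1 hp),
         fun b hp => le_trans (mul_le_mul_right hyx b) (h2 b hp),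
         fun c hp => le_trans (mul_le_mul_left hyx c) (h3 c hp),
         fun b c hp =>
           le_trans (mul_le_mul_left (mul_le_mul_right hyx b) c) (h4 b c hp)⟩

lemma pcl_lowerClosure (D : Set S) : pcl S ↑(lowerClosure D) = pcl S D := by
  refine subset_antisymm ?_ (pcl_mono (subset_lowerClosure (s := D)))
  have hsub : ↑(lowerClosure D) ⊆ pcl S D := by
    intro x hx
    obtain ⟨d, hd, hxd⟩ := hx
    exact pcl_isLowerSet D hxd (subset_pcl D hd)
  calc pcl S ↑(lowerClosure D) ⊆ pcl S (pcl S D) := pcl_mono hsub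
    _ = pcl S D := pcl_pcl D

lemma lowerClosure_of_isLowerSet {D : Set S} (h : IsLowerSet D) :
    (↑(lowerClosure D) : Set S) = D := by
  exact h.lowerClosure

end Aux

/-- Characterizations of closure-preserving posemigroup morphisms. -/
theorem stmt12 {S T : Type*} [Semigroup S] [PartialOrder S]
    [CovariantClass S S (· * ·) (· ≤ ·)]
    [CovariantClass S S (Function.swap (· * ·)) (· ≤ ·)]
    [Semigroup T] [PartialOrder T]
    [CovariantClass T T (· * ·) (· ≤ ·)]
    [CovariantClass T T (Function.swap (· * ·)) (· ≤ ·)]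
    (f : S → T) (hmono : Monotone f) (hmul : ∀ a b : S, f (a * b) = f a * f b) :
    ((∀ M : Set S, f '' pcl S ↑(lowerClosure M) ⊆ pcl T ↑(lowerClosure (f '' M))) ↔
     (∀ M : Set S, IsLowerSet M →
        pcl T ↑(lowerClosure (f '' pcl S M)) = pcl T ↑(lowerClosure (f '' M)))) ∧
    ((∀ M : Set S, IsLowerSet M →
        pcl T ↑(lowerClosure (f '' pcl S M)) = pcl T ↑(lowerClosure (f '' M))) ↔
     (∀ M : Set T, IsLowerSet M → pcl T M = M →
        pcl S ↑(lowerClosure (f ⁻¹' M)) = f ⁻¹' M)) := by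
  constructor
  · constructor
    · -- (1) → (2)
      intro h1 M hM
      rw [pcl_lowerClosure, pcl_lowerClosure]
      refine subset_antisymm ?_ (pcl_mono (Set.image_mono (f := f) (subset_pcl M)))
      have key : f '' pcl S M ⊆ pcl T (f '' M) := by
        have := h1 M
        rw [hM.lowerClosure, pcl_lowerClosure] at this
        exact this
      exact (pcl_mono key).trans (pcl_pcl _).subset
    · -- (2) → (1)
      intro h2 M
      rintro _ ⟨x, hx, rfl⟩
      have h2' := h2 ↑(lowerClosure M) (lowerClosure M).lower
      have hmem : f x ∈ pcl T ↑(lowerClosure (f '' pcl S ↑(lowerClosure M))) :=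
        subset_pcl _ (subset_lowerClosure ⟨x, hx, rfl⟩)
      rw [h2', pcl_lowerClosure] at hmem
      rw [pcl_lowerClosure]
      have hsub : f '' ↑(lowerClosure M) ⊆ pcl T (f '' M) := by
        rintro _ ⟨x', ⟨m, hm, hx'm⟩, rfl⟩
        exact pcl_isLowerSet _ (hmono hx'm) (subset_pcl _ ⟨m, hm, rfl⟩)
      exact ((pcl_mono hsub).trans (pcl_pcl _).subset) hmem
  · constructor
    · -- (2) → (3)
      intro h2 M hM hcl
      rw [pcl_lowerClosure]
      have hNlow : IsLowerSet (f ⁻¹' M) := hM.preimage hmono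
      refine subset_antisymm ?_ (subset_pcl _)
      intro x hx
      have hmem : f x ∈ pcl T ↑(lowerClosure (f '' pcl S (f ⁻¹' M))) :=
        subset_pcl _ (subset_lowerClosure ⟨x, hx, rfl⟩)
      rw [h2 (f ⁻¹' M) hNlow, pcl_lowerClosure] at hmem
      have : pcl T (f '' (f ⁻¹' M)) ⊆ M := by
        calc pcl T (f '' (f ⁻¹' M)) ⊆ pcl T M := pcl_mono (Set.image_preimage_subset f M)
          _ = M := hcl
      exact this hmem
    · -- (3) → (2)
      intro h3 M hM
      rw [pcl_lowerClosure, pcl_lowerClosure]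
      refine subset_antisymm ?_ (pcl_mono (Set.image_mono (f := f) (subset_pcl M)))
      have h3' := h3 (pcl T (f '' M)) (pcl_isLowerSet _) (pcl_pcl _)
      rw [pcl_lowerClosure] at h3'
      have hMsub : M ⊆ f ⁻¹' (pcl T (f '' M)) := fun x hx => subset_pcl _ ⟨x, hx, rfl⟩
      have key : pcl S M ⊆ f ⁻¹' (pcl T (f '' M)) := (pcl_mono hMsub).trans h3'.subset
      have hsub : f '' pcl S M ⊆ pcl T (f '' M) := by
        rintro _ ⟨x, hx, rfl⟩; exact key hx
      exact (pcl_mono hsub).trans (pcl_pcl _).subset
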